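/- Let m = (x,y), m' = (x',y') be points in the closed upper half-space (x, x' ≥ 0, not both zero together with y = y'), r = |y − y'|, ρ² = (x+x')² + r². Define the (d+1)×(d+1) matrix τ with entries τ₀₀ = 1 − 2r²/ρ², τ₀ⱼ = −2(x+x')(yⱼ−y'ⱼ)/ρ², τⱼ₀ = 2(x+x')(yⱼ−y'ⱼ)/ρ², τⱼₗ = δⱼₗ − 2(yⱼ−y'ⱼ)(yₗ−y'ₗ)/ρ² for j,l ∈ {1,…,d}. Then τ is a special orthogonal matrix. -/

import Mathlib

open scoped Matrix

/-- The parallel-transport matrix `τ(m,m')` of hyperbolic space, with entries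
`τ₀₀ = 1 - 2r²/ρ²`, `τ₀ⱼ = -2(x+x')(yⱼ-y'ⱼ)/ρ²`, `τⱼ₀ = 2(x+x')(yⱼ-y'ⱼ)/ρ²`,
`τⱼₗ = δⱼₗ - 2(yⱼ-y'ⱼ)(yₗ-y'ₗ)/ρ²`, where `r = |y-y'|` and `ρ² = (x+x')² + r² > 0`,
is a special orthogonal matrix. -/
theorem stmt11 (d : ℕ) (x x' : ℝ) (y y' : Fin d → ℝ)
    (hx : 0 ≤ x) (hx' : 0 ≤ x')
    (hρ : 0 < (x + x') ^ 2 + ∑ j, (y j - y' j) ^ 2) :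
    (Matrix.of fun i j : Unit ⊕ Fin d =>
      match i, j with
      | Sum.inl _, Sum.inl _ =>
          1 - 2 * (∑ j, (y j - y' j) ^ 2) / ((x + x') ^ 2 + ∑ j, (y j - y' j) ^ 2)
      | Sum.inl _, Sum.inr l =>
          -2 * (x + x') * (y l - y' l) / ((x + x') ^ 2 + ∑ j, (y j - y' j) ^ 2)
      | Sum.inr k, Sum.inl _ =>
          2 * (x + x') * (y k - y' k) / ((x + x') ^ 2 + ∑ j, (y j - y' j) ^ 2)
      | Sum.inr k, Sum.inr l =>
          (if k = l then (1 : ℝ) else 0) -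
            2 * (y k - y' k) * (y l - y' l) / ((x + x') ^ 2 + ∑ j, (y j - y' j) ^ 2))
      ∈ Matrix.specialOrthogonalGroup (Unit ⊕ Fin d) ℝ := by
  classical
  set r2 := ∑ j, (y j - y' j) ^ 2 with hr2
  set ρ2 := (x + x') ^ 2 + r2 with hρ2
  have hρ0 : ρ2 ≠ 0 := ne_of_gt hρ
  set w : Unit ⊕ Fin d → ℝ := Sum.elim (fun _ => x + x') (fun j => y j - y' j) with hw
  have hww : w ⬝ᵥ w = ρ2 := by
    simp [dotProduct, hw, Fintype.sum_sum_type, hρ2, hr2, sq]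
  set M : Matrix (Unit ⊕ Fin d) (Unit ⊕ Fin d) ℝ :=
    Matrix.replicateCol Unit w * Matrix.replicateRow Unit w with hM
  set S : Matrix (Unit ⊕ Fin d) (Unit ⊕ Fin d) ℝ := 1 - (2 / ρ2) • M with hS
  set D : Matrix (Unit ⊕ Fin d) (Unit ⊕ Fin d) ℝ :=
    Matrix.diagonal (Sum.elim (fun _ => (-1 : ℝ)) fun _ => 1) with hD
  have hMM : M * M = ρ2 • M := by
    rw [hM, Matrix.mul_assoc, ← Matrix.mul_assoc (Matrix.replicateRow Unit w),
      Matrix.replicateRow_mul_replicateCol, hww]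
    have h1 : (Matrix.of fun _ _ : Unit => ρ2) = ρ2 • (1 : Matrix Unit Unit ℝ) := by
      ext i j
      simp [Matrix.one_apply]
    rw [h1]
    simp [Matrix.mul_smul, Matrix.smul_mul]
  have hSS : S * S = 1 := by
    rw [hS]
    simp only [Matrix.mul_sub, Matrix.sub_mul, Matrix.one_mul, Matrix.mul_one,
      Matrix.smul_mul, Matrix.mul_smul, hMM, smul_smul]
    rw [div_mul_cancel₀ (2 : ℝ) hρ0]
    module
  have hSsym : star S = S := by
    rw [Matrix.star_eq_conjTranspose, hS, hM]
    simp [Matrix.conjTranspose_sub, Matrix.conjTranspose_smul, Matrix.conjTranspose_mul,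
      Matrix.conjTranspose_replicateCol, Matrix.conjTranspose_replicateRow]
  have hDsym : star D = D := by
    rw [Matrix.star_eq_conjTranspose, hD, Matrix.diagonal_conjTranspose]
    congr 1
  have hDD : D * D = 1 := by
    rw [hD, Matrix.diagonal_mul_diagonal]
    ext i j
    rcases i with i | i <;> rcases j with j | j <;>
      simp [Matrix.diagonal_apply, Matrix.one_apply]
  have hdetS : S.det = -1 := by
    have h2 : S = 1 + Matrix.replicateCol Unit ((-(2 / ρ2)) • w) * Matrix.replicateRow Unit w := by
      rw [Matrix.replicateCol_smul, Matrix.smul_mul, neg_smul, ← sub_eq_add_neg, ← hM, ← hS]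
    rw [h2, Matrix.det_one_add_replicateCol_mul_replicateRow, dotProduct_smul, hww]
    field_simp
    rw [smul_eq_mul, neg_mul, div_mul_cancel₀ (2 : ℝ) hρ0]
    ring
  have hdetD : D.det = -1 := by
    rw [hD, Matrix.det_diagonal, Fintype.prod_sum_type]
    simp
  have hτ : (Matrix.of fun i j : Unit ⊕ Fin d =>
      match i, j with
      | Sum.inl _, Sum.inl _ => 1 - 2 * r2 / ρ2
      | Sum.inl _, Sum.inr l => -2 * (x + x') * (y l - y' l) / ρ2
      | Sum.inr k, Sum.inl _ => 2 * (x + x') * (y k - y' k) / ρ2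
      | Sum.inr k, Sum.inr l =>
          (if k = l then (1 : ℝ) else 0) - 2 * (y k - y' k) * (y l - y' l) / ρ2) = S * D := by
    ext i j
    have hSapp : ∀ a b : Unit ⊕ Fin d,
        S a b = (if a = b then (1 : ℝ) else 0) - 2 / ρ2 * (w a * w b) := by
      intro a b
      rw [hS, hM]
      simp [Matrix.sub_apply, Matrix.one_apply, Matrix.smul_apply, Matrix.mul_apply]
    rw [hD, Matrix.mul_diagonal, hSapp]
    rcases i with i | i <;> rcases j with j | j <;>
      simp only [Matrix.of_apply, hw, Sum.elim_inl, Sum.elim_inr, Sum.inl.injEq,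
        Sum.inr.injEq, reduceCtorEq, if_true, if_false]
    · rw [hρ2] at hρ0 ⊢
      field_simp
      ring
    · ring
    · ring
    · rcases eq_or_ne i j with h | h <;> simp [h] <;> ring
  rw [hτ, Matrix.mem_specialOrthogonalGroup_iff]
  constructor
  · rw [Matrix.mem_orthogonalGroup_iff,
      ← Matrix.conjTranspose_eq_transpose_of_trivial, ← Matrix.star_eq_conjTranspose, star_mul, hSsym, hDsym, Matrix.mul_assoc,
      ← Matrix.mul_assoc D, hDD, Matrix.one_mul, hSS]
  · rw [Matrix.det_mul, hdetS, hdetD]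
    norm_num
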